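/- (Existence of a deterministic optimizer, Appendix claim.) Let p_1,…,p_J ∈ Δ_N and f_1,…,f_J ≥ 0 with ∑_j f_j = 1. For row-stochastic r ∈ ℝ^{J×K} define s_{k,n}(r) = ∑_{j=1}^J f_j p_{j,n} r_{j,k}, t_k(r) = ∑_{n=1}^N s_{k,n}(r), and G(r) = ∑_{k,n : s_{k,n}(r)>0} s_{k,n}(r) log(t_k(r)/s_{k,n}(r)) (with the convention 0·log 0 = 0). Then there exists a row-stochastic matrix r* with every entry in {0,1} such that G(r*) ≤ G(r) for all row-stochastic r; that is, the relaxed clustering problem attains its minimum at a deterministic clustering. -/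

import Mathlib

open Finset

/-- The standard probability simplex `Δ_N` in `ℝ^N`. -/
def simplex (N : ℕ) : Set (Fin N → ℝ) :=
  {p | (∀ n, 0 ≤ p n) ∧ ∑ n, p n = 1}

/-- Kullback–Leibler divergence `D(p‖q) = ∑_{n : p_n > 0} p_n log(p_n/q_n)`
(natural log, convention `0 · log 0 = 0`, which holds definitionally since
`p n = 0` makes the summand `0`). -/
noncomputable def KL {N : ℕ} (p q : Fin N → ℝ) : ℝ :=
  ∑ n, p n * Real.log (p n / q n)


/-- log-sum inequality: if `0 ≤ a i ≤ b i` then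
`∑ a i log(b i / a i) ≤ (∑ a) log(∑ b / ∑ a)`. -/
lemma my_log_sum {ι : Type*} (s : Finset ι) (a b : ι → ℝ)
    (ha : ∀ i ∈ s, 0 ≤ a i) (hab : ∀ i ∈ s, a i ≤ b i) :
    ∑ i ∈ s, a i * Real.log (b i / a i) ≤
      (∑ i ∈ s, a i) * Real.log ((∑ i ∈ s, b i) / ∑ i ∈ s, a i) := by
  set A := ∑ i ∈ s, a i with hA
  set B := ∑ i ∈ s, b i with hB
  have hA0 : 0 ≤ A := Finset.sum_nonneg ha
  have hAB : A ≤ B := Finset.sum_le_sum hab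
  rcases eq_or_lt_of_le hA0 with h0 | hApos
  · have hz : ∀ i ∈ s, a i = 0 :=
      (Finset.sum_eq_zero_iff_of_nonneg ha).mp h0.symm
    rw [← h0, zero_mul]
    rw [Finset.sum_eq_zero]
    intro i hi
    rw [hz i hi, zero_mul]
  · have hB0 : 0 < B := lt_of_lt_of_le hApos hAB
    have key : ∀ i ∈ s,
        a i * Real.log (b i / a i) - a i * Real.log (B / A) ≤ A / B * b i - a i := by
      intro i hi
      rcases eq_or_lt_of_le (ha i hi) with h0 | hpos
      · rw [← h0]
        simp only [zero_mul, sub_zero, sub_zero, mul_zero]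
        have : 0 ≤ b i := le_trans (le_of_eq h0) (hab i hi)
        positivity
      · have hb : 0 < b i := lt_of_lt_of_le hpos (hab i hi)
        rw [← mul_sub, ← Real.log_div (by positivity) (by positivity)]
        have hx : (0:ℝ) < b i / a i / (B / A) := by positivity
        calc a i * Real.log (b i / a i / (B / A))
            ≤ a i * (b i / a i / (B / A) - 1) :=
              mul_le_mul_of_nonneg_left (Real.log_le_sub_one_of_pos hx) hpos.le
          _ = A / B * b i - a i := by field_simp
    have hsum := Finset.sum_le_sum key
    rw [Finset.sum_sub_distrib, Finset.sum_sub_distrib, ← Finset.sum_mul,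
      ← Finset.mul_sum, ← hA, ← hB] at hsum
    have : A / B * B - A = 0 := by field_simp; ring
    linarith

section main
variable {N J K : ℕ} (p : Fin J → Fin N → ℝ) (f : Fin J → ℝ)

/-- The aggregated mass `s_{k,n}(r)`. -/
def Smat (r : Fin J → Fin K → ℝ) (k : Fin K) (n : Fin N) : ℝ :=
  ∑ j, f j * p j n * r j k

/-- The objective `G(r)`. -/
noncomputable def Gfun (r : Fin J → Fin K → ℝ) : ℝ :=
  ∑ k, ∑ n, Smat p f r k n *
    Real.log ((∑ n', Smat p f r k n') / Smat p f r k n)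

/-- Deterministic matrix associated to `σ`. -/
def Dmat (σ : Fin J → Fin K) (j : Fin J) (k : Fin K) : ℝ :=
  if σ j = k then 1 else 0

/-- weight of `σ` under `r`. -/
def wgt (r : Fin J → Fin K → ℝ) (σ : Fin J → Fin K) : ℝ :=
  ∏ j, r j (σ j)

lemma wgt_nonneg (r : Fin J → Fin K → ℝ) (hr0 : ∀ j k, 0 ≤ r j k)
    (σ : Fin J → Fin K) : 0 ≤ wgt r σ :=
  Finset.prod_nonneg fun j _ => hr0 j (σ j)

lemma wgt_sum (r : Fin J → Fin K → ℝ) (hr1 : ∀ j, ∑ k, r j k = 1) :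
    ∑ σ : Fin J → Fin K, wgt r σ = 1 := by
  have := (Fintype.prod_sum (fun (j : Fin J) (k : Fin K) => r j k)).symm
  simp only [wgt]
  rw [this]
  simp [hr1]

lemma marginal (r : Fin J → Fin K → ℝ) (hr1 : ∀ j, ∑ k, r j k = 1)
    (j : Fin J) (k : Fin K) :
    ∑ σ : Fin J → Fin K, wgt r σ * Dmat σ j k = r j k := by
  classical
  set g : Fin J → Fin K → ℝ :=
    fun j' k' => if j' = j then (if k' = k then r j k else 0) else r j' k' with hg
  have step : ∀ σ : Fin J → Fin K, wgt r σ * Dmat σ j k = ∏ j', g j' (σ j') := by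
    intro σ
    by_cases h : σ j = k
    · simp only [Dmat, if_pos h, mul_one, wgt]
      apply Finset.prod_congr rfl
      intro j' _
      by_cases hj : j' = j
      · subst hj; simp [hg, h]
      · simp [hg, hj]
    · simp only [Dmat, if_neg h, mul_zero]
      symm
      apply Finset.prod_eq_zero (Finset.mem_univ j)
      simp [hg, h]
  rw [Finset.sum_congr rfl fun σ _ => step σ]
  rw [← Fintype.prod_sum g]
  have hfac : ∀ j', ∑ k', g j' k' = if j' = j then r j k else 1 := by
    intro j'
    by_cases hj : j' = j
    · simp [hg, hj]
    · simp [hg, hj, hr1 j']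
  rw [Finset.prod_congr rfl fun j' _ => hfac j']
  simp

lemma S_decomp (r : Fin J → Fin K → ℝ) (hr1 : ∀ j, ∑ k, r j k = 1)
    (k : Fin K) (n : Fin N) :
    ∑ σ : Fin J → Fin K, wgt r σ * Smat p f (Dmat σ) k n = Smat p f r k n := by
  simp only [Smat, Finset.mul_sum]
  rw [Finset.sum_comm]
  apply Finset.sum_congr rfl
  intro j _
  rw [← marginal r hr1 j k, Finset.mul_sum]
  · apply Finset.sum_congr rfl; intro σ _; ring

lemma Smat_D_nonneg (hp : ∀ j, p j ∈ simplex N) (hf : ∀ j, 0 ≤ f j)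
    (σ : Fin J → Fin K) (k : Fin K) (n : Fin N) :
    0 ≤ Smat p f (Dmat σ) k n := by
  apply Finset.sum_nonneg
  intro j _
  have := (hp j).1 n
  have := hf j
  have : (0:ℝ) ≤ Dmat σ j k := by unfold Dmat; positivity
  positivity

lemma G_ge (r : Fin J → Fin K → ℝ) (hr0 : ∀ j k, 0 ≤ r j k)
    (hr1 : ∀ j, ∑ k, r j k = 1)
    (hp : ∀ j, p j ∈ simplex N) (hf : ∀ j, 0 ≤ f j) :
    ∑ σ : Fin J → Fin K, wgt r σ * Gfun p f (Dmat σ) ≤ Gfun p f r := by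
  have key : ∀ (k : Fin K) (n : Fin N),
      ∑ σ : Fin J → Fin K, wgt r σ *
        (Smat p f (Dmat σ) k n *
          Real.log ((∑ n', Smat p f (Dmat σ) k n') / Smat p f (Dmat σ) k n)) ≤
      Smat p f r k n *
        Real.log ((∑ n', Smat p f r k n') / Smat p f r k n) := by
    intro k n
    set a : (Fin J → Fin K) → ℝ := fun σ => wgt r σ * Smat p f (Dmat σ) k n with hadef
    set b : (Fin J → Fin K) → ℝ :=
      fun σ => wgt r σ * ∑ n', Smat p f (Dmat σ) k n' with hbdef
    have ha : ∀ σ ∈ Finset.univ, 0 ≤ a σ := fun σ _ =>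
      mul_nonneg (wgt_nonneg r hr0 σ) (Smat_D_nonneg p f hp hf σ k n)
    have hab : ∀ σ ∈ Finset.univ, a σ ≤ b σ := by
      intro σ _
      apply mul_le_mul_of_nonneg_left _ (wgt_nonneg r hr0 σ)
      exact Finset.single_le_sum
        (fun n' _ => Smat_D_nonneg p f hp hf σ k n') (Finset.mem_univ n)
    have hsum := my_log_sum Finset.univ a b ha hab
    have hsa : ∑ σ, a σ = Smat p f r k n := S_decomp p f r hr1 k n
    have hsb : ∑ σ, b σ = ∑ n', Smat p f r k n' := by
      simp only [hbdef, Finset.mul_sum]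
      rw [Finset.sum_comm]
      exact Finset.sum_congr rfl fun n' _ => S_decomp p f r hr1 k n'
    rw [hsa, hsb] at hsum
    refine le_trans (le_of_eq ?_) hsum
    apply Finset.sum_congr rfl
    intro σ _
    by_cases hw : wgt r σ = 0
    · simp [hadef, hw]
    · simp only [hadef, hbdef]
      rw [mul_div_mul_left _ _ hw]
      ring
  calc ∑ σ : Fin J → Fin K, wgt r σ * Gfun p f (Dmat σ)
      = ∑ k, ∑ n, ∑ σ : Fin J → Fin K, wgt r σ *
          (Smat p f (Dmat σ) k n *
            Real.log ((∑ n', Smat p f (Dmat σ) k n') / Smat p f (Dmat σ) k n)) := by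
        simp only [Gfun, Finset.mul_sum]
        rw [Finset.sum_comm]
        exact Finset.sum_congr rfl fun k _ => Finset.sum_comm
    _ ≤ ∑ k, ∑ n, Smat p f r k n *
          Real.log ((∑ n', Smat p f r k n') / Smat p f r k n) :=
        Finset.sum_le_sum fun k _ => Finset.sum_le_sum fun n _ => key k n
    _ = Gfun p f r := rfl

end main


/-- existence of a deterministic optimizer, Appendix claim:
the relaxed clustering objective `G` attains its minimum over row-stochastic
matrices at a 0-1 (deterministic) matrix. -/
theorem stmt_13 (N J K : ℕ) (hK : 1 ≤ K)
    (p : Fin J → Fin N → ℝ) (hp : ∀ j, p j ∈ simplex N)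
    (f : Fin J → ℝ) (hf : ∀ j, 0 ≤ f j) (hfsum : ∑ j, f j = 1) :
    ∃ rstar : Fin J → Fin K → ℝ,
      (∀ j k, 0 ≤ rstar j k) ∧ (∀ j, ∑ k, rstar j k = 1) ∧
      (∀ j k, rstar j k = 0 ∨ rstar j k = 1) ∧
      ∀ r : Fin J → Fin K → ℝ,
        (∀ j k, 0 ≤ r j k) → (∀ j, ∑ k, r j k = 1) →
        (∑ k, ∑ n, (∑ j, f j * p j n * rstar j k) *
            Real.log ((∑ n', ∑ j, f j * p j n' * rstar j k) /
              (∑ j, f j * p j n * rstar j k))) ≤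
          ∑ k, ∑ n, (∑ j, f j * p j n * r j k) *
            Real.log ((∑ n', ∑ j, f j * p j n' * r j k) /
              (∑ j, f j * p j n * r j k)) := by

  classical
  haveI : Nonempty (Fin K) := ⟨⟨0, hK⟩⟩
  obtain ⟨σs, -, hmin⟩ := Finset.exists_min_image
    (Finset.univ : Finset (Fin J → Fin K)) (fun σ => Gfun p f (Dmat σ))
    ⟨Classical.arbitrary _, Finset.mem_univ _⟩
  refine ⟨Dmat σs, ?_, ?_, ?_, ?_⟩
  · intro j k
    unfold Dmat; positivity
  · intro j
    simp [Dmat]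
  · intro j k
    unfold Dmat; split
    · right; rfl
    · left; rfl
  · intro r hr0 hr1
    have h1 : ∑ σ : Fin J → Fin K, wgt r σ * Gfun p f (Dmat σ) ≤ Gfun p f r :=
      G_ge p f r hr0 hr1 hp hf
    have h2 : Gfun p f (Dmat σs) ≤
        ∑ σ : Fin J → Fin K, wgt r σ * Gfun p f (Dmat σ) := by
      have : Gfun p f (Dmat σs) =
          ∑ σ : Fin J → Fin K, wgt r σ * Gfun p f (Dmat σs) := by
        rw [← Finset.sum_mul, wgt_sum r hr1, one_mul]
      rw [this]
      exact Finset.sum_le_sum fun σ _ =>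
        mul_le_mul_of_nonneg_left (hmin σ (Finset.mem_univ σ)) (wgt_nonneg r hr0 σ)
    exact le_trans h2 h1
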